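/- arXiv:1807.09404 — 2 statements merged into one kernel-verified Lean document; each statement's English description precedes it below -/
import Mathlib

section
/- If T is a tree on n ≥ 3 vertices, then there exists a set S ⊆ V(T) containing no leaves of T such that th₊(T) = |S| + pt₊(T;S). -/
open SimpleGraph

/-- Reachability in `G` avoiding the blue set `B` (i.e., within a white component). -/
def offReach {V : Type*} (G : SimpleGraph V) (B : Set V) : V → V → Prop :=
  Relation.ReflTransGen (fun a b => G.Adj a b ∧ a ∉ B ∧ b ∉ B)

/-- The positive semidefinite color change rule: a blue vertex `v` forces a white vertex `w`
if `w` is the unique white neighbor of `v` in the white component of `w` (together with `B`). -/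
def psdForces {V : Type*} (G : SimpleGraph V) (B : Set V) (v w : V) : Prop :=
  v ∈ B ∧ w ∉ B ∧ G.Adj v w ∧
    ∀ u, u ∉ B → G.Adj v u → offReach G B u w → u = w

/-- One round of PSD forcing: perform all possible forces. -/
def psdStep {V : Type*} (G : SimpleGraph V) (B : Set V) : Set V :=
  B ∪ {w | ∃ v, psdForces G B v w}

/-- `S` is a positive semidefinite zero forcing set. -/
def IsPSDForcingSet {V : Type*} (G : SimpleGraph V) (S : Set V) : Prop :=
  ∃ t, (psdStep G)^[t] S = Set.univ

/-- The PSD propagation time of `S`. -/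
noncomputable def psdPt {V : Type*} (G : SimpleGraph V) (S : Set V) : ℕ :=
  sInf {t | (psdStep G)^[t] S = Set.univ}

/-- The PSD throttling number of `G`. -/
noncomputable def psdTh {V : Type*} (G : SimpleGraph V) [Fintype V] : ℕ :=
  sInf {k | ∃ S : Finset V, IsPSDForcingSet G ↑S ∧ k = S.card + psdPt G ↑S}

/-! ### Auxiliary lemmas -/

lemma offReach_anti {V : Type*} (G : SimpleGraph V) {B B' : Set V} (h : B ⊆ B') {a b : V}
    (hr : offReach G B' a b) : offReach G B a b :=
  Relation.ReflTransGen.mono (r := fun a b => G.Adj a b ∧ a ∉ B' ∧ b ∉ B')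
    (p := fun a b => G.Adj a b ∧ a ∉ B ∧ b ∉ B) (fun x y (hxy : G.Adj x y ∧ x ∉ B' ∧ y ∉ B') =>
    let ⟨hadj, hx, hy⟩ := hxy
    (⟨hadj, fun hx' => hx (h hx'), fun hy' => hy (h hy')⟩ : G.Adj x y ∧ x ∉ B ∧ y ∉ B)) a b hr

lemma psdForces_mono {V : Type*} (G : SimpleGraph V) {B B' : Set V} (h : B ⊆ B') {p w : V}
    (hf : psdForces G B p w) (hw : w ∉ B') : psdForces G B' p w := by
  obtain ⟨hp, _, hadj, huniq⟩ := hf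
  exact ⟨h hp, hw, hadj, fun z hz hza hr =>
    huniq z (fun c => hz (h c)) hza (offReach_anti G h hr)⟩

lemma psdStep_mono {V : Type*} (G : SimpleGraph V) {B B' : Set V} (h : B ⊆ B') :
    psdStep G B ⊆ psdStep G B' := by
  rintro x (hx | ⟨p, hf⟩)
  · exact Or.inl (h hx)
  · by_cases hx' : x ∈ B'
    · exact Or.inl hx'
    · exact Or.inr ⟨p, psdForces_mono G h hf hx'⟩

lemma psdStep_iterate_mono {V : Type*} (G : SimpleGraph V) {B B' : Set V} (h : B ⊆ B') :
    ∀ t, (psdStep G)^[t] B ⊆ (psdStep G)^[t] B' := by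
  intro t
  induction t with
  | zero => exact h
  | succ t ih =>
    rw [Function.iterate_succ_apply', Function.iterate_succ_apply']
    exact psdStep_mono G ih

lemma leaf_forces {V : Type*} (G : SimpleGraph V) {B : Set V} {u v : V}
    (hN : G.neighborSet v = {u}) (hu : u ∈ B) (hv : v ∉ B) : psdForces G B u v := by
  have hadj : G.Adj v u := by
    have : u ∈ G.neighborSet v := by rw [hN]; rfl
    exact this
  refine ⟨hu, hv, hadj.symm, ?_⟩
  intro z hz hza hr
  rcases Relation.ReflTransGen.cases_tail hr with h | ⟨c, _, hc, hcB, _⟩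
  · exact h.symm
  · exfalso
    have : c ∈ G.neighborSet v := hc.symm
    rw [hN] at this
    exact hcB (this ▸ hu)

lemma step_subset_swap {V : Type*} (G : SimpleGraph V) {B : Set V} {u v : V}
    (hN : G.neighborSet v = {u}) (hv : v ∈ B) (hu : u ∉ B) :
    psdStep G B ⊆ psdStep G (insert u (B \ {v})) := by
  have hadj : G.Adj v u := by
    have : u ∈ G.neighborSet v := by rw [hN]; rfl
    exact this
  set B' : Set V := insert u (B \ {v}) with hB'
  have hvB' : v ∉ B' := by
    rintro (h | ⟨_, h⟩)
    · exact hadj.ne h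
    · exact h rfl
  have hsub : B \ {v} ⊆ B' := Set.subset_insert _ _
  have hnbr : ∀ c : V, G.Adj c v → c = u := by
    intro c hc
    have : c ∈ G.neighborSet v := hc.symm
    rw [hN] at this
    exact this
  have hr : ∀ a b : V, (G.Adj a b ∧ a ∉ B' ∧ b ∉ B') → (G.Adj a b ∧ a ∉ B ∧ b ∉ B) := by
    rintro a b ⟨hab, haB', hbB'⟩
    have hav : a ≠ v := by
      intro heq
      rw [heq] at hab
      exact hbB' (Or.inl (hnbr b hab.symm))
    have hbv : b ≠ v := by
      intro heq
      rw [heq] at hab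
      exact haB' (Or.inl (hnbr a hab))
    exact ⟨hab, fun h => haB' (hsub ⟨h, hav⟩), fun h => hbB' (hsub ⟨h, hbv⟩)⟩
  have hreach : ∀ a b : V, offReach G B' a b → offReach G B a b :=
    fun a b h => Relation.ReflTransGen.mono (r := fun a b => G.Adj a b ∧ a ∉ B' ∧ b ∉ B')
      (p := fun a b => G.Adj a b ∧ a ∉ B ∧ b ∉ B) hr a b h
  rintro x (hx | ⟨p, hp, hw, hpadj, huniq⟩)
  · by_cases hxv : x = v
    · subst hxv
      refine Or.inr ⟨u, Or.inl rfl, hvB', hadj.symm, ?_⟩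
      intro z hz hza hrz
      rcases Relation.ReflTransGen.cases_tail hrz with h | ⟨c, _, hc, hcB, _⟩
      · exact h.symm
      · exact absurd (Or.inl (hnbr c hc)) hcB
    · exact Or.inl (hsub ⟨hx, hxv⟩)
  · by_cases hxB' : x ∈ B'
    · exact Or.inl hxB'
    have hpv : p ≠ v := by
      intro heq
      rw [heq] at hpadj
      exact hxB' (Or.inl (hnbr x hpadj.symm))
    refine Or.inr ⟨p, hsub ⟨hp, hpv⟩, hxB', hpadj, ?_⟩
    intro z hz hza hrz
    have hzv : z ≠ v := by
      intro heq
      rw [heq] at hza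
      exact hu ((hnbr p hza) ▸ hp)
    have hzB : z ∉ B := fun h => hz (hsub ⟨h, hzv⟩)
    exact huniq z hzB hza (hreach z x hrz)

lemma neighbor_not_leaf {V : Type*} [Fintype V] (G : SimpleGraph V) (hc : G.Connected)
    (hn : 3 ≤ Fintype.card V) {u v : V} (hN : G.neighborSet v = {u}) :
    (G.neighborSet u).ncard ≠ 1 := by
  intro h1
  obtain ⟨w, hw⟩ := Set.ncard_eq_one.mp h1
  have hadj : G.Adj v u := by
    have : u ∈ G.neighborSet v := by rw [hN]; rfl
    exact this
  have hwv : v = w := by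
    have : v ∈ G.neighborSet u := hadj.symm
    rw [hw] at this
    exact this
  rw [← hwv] at hw
  have key : ∀ (a b : V), G.Walk a b → a ∈ ({u, v} : Set V) → b ∈ ({u, v} : Set V) := by
    intro a b p
    induction p with
    | nil => exact id
    | @cons a c b hac p ih =>
      intro ha
      apply ih
      rcases ha with ha | ha
      · rw [ha] at hac
        have : c ∈ G.neighborSet u := hac
        rw [hw] at this
        exact Or.inr this
      · rw [ha] at hac
        have : c ∈ G.neighborSet v := hac
        rw [hN] at this
        exact Or.inl this
  have huniv : (Set.univ : Set V) ⊆ ({u, v} : Set V) := by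
    intro b _
    obtain ⟨p⟩ := (hc u b)
    exact key u b p (Or.inl rfl)
  have hle : Fintype.card V ≤ 2 := by
    have h2 : ({u, v} : Set V).ncard ≤ 2 := by
      calc ({u, v} : Set V).ncard ≤ ({v} : Set V).ncard + 1 := Set.ncard_insert_le _ _
        _ = 2 := by rw [Set.ncard_singleton]
    calc Fintype.card V = (Set.univ : Set V).ncard := by
            rw [Set.ncard_univ, Nat.card_eq_fintype_card]
      _ ≤ ({u, v} : Set V).ncard := Set.ncard_le_ncard huniv (Set.toFinite _)
      _ ≤ 2 := h2
  omega

lemma psdPt_spec {V : Type*} (G : SimpleGraph V) {S : Set V} (h : IsPSDForcingSet G S) :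
    (psdStep G)^[psdPt G S] S = Set.univ := Nat.sInf_mem h

lemma psdPt_le {V : Type*} (G : SimpleGraph V) {S : Set V} {t : ℕ}
    (h : (psdStep G)^[t] S = Set.univ) : psdPt G S ≤ t := Nat.sInf_le h

lemma psdTh_le {V : Type*} [Fintype V] (G : SimpleGraph V) {S : Finset V}
    (h : IsPSDForcingSet G ↑S) : psdTh G ≤ S.card + psdPt G ↑S :=
  Nat.sInf_le ⟨S, h, rfl⟩

lemma psdTh_exists {V : Type*} [Fintype V] (G : SimpleGraph V) :
    ∃ S : Finset V, IsPSDForcingSet G ↑S ∧ psdTh G = S.card + psdPt G ↑S := by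
  have hne : {k | ∃ S : Finset V, IsPSDForcingSet G ↑S ∧ k = S.card + psdPt G ↑S}.Nonempty :=
    ⟨Finset.univ.card + psdPt G ↑(Finset.univ : Finset V),
      (Finset.univ : Finset V), ⟨0, by simp⟩, rfl⟩
  exact Nat.sInf_mem hne

open scoped Classical in
/-- Number of leaves contained in `S`. -/
noncomputable def leafCount {V : Type*} (T : SimpleGraph V) (S : Finset V) : ℕ :=
  (S.filter (fun v => (T.neighborSet v).ncard = 1)).card

lemma main_aux {V : Type*} [Fintype V] (T : SimpleGraph V) (hc : T.Connected)
    (hn : 3 ≤ Fintype.card V) :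
    ∀ k (S : Finset V), leafCount T S ≤ k → IsPSDForcingSet T ↑S →
      psdTh T = S.card + psdPt T ↑S →
      ∃ S₀ : Finset V, (∀ v ∈ S₀, (T.neighborSet v).ncard ≠ 1) ∧
        IsPSDForcingSet T ↑S₀ ∧ psdTh T = S₀.card + psdPt T ↑S₀ := by
  classical
  intro k
  induction k with
  | zero =>
    intro S hlc hforce heq
    refine ⟨S, ?_, hforce, heq⟩
    intro v hv h1
    have : v ∈ S.filter (fun v => (T.neighborSet v).ncard = 1) := Finset.mem_filter.mpr ⟨hv, h1⟩
    have hz : (S.filter (fun v => (T.neighborSet v).ncard = 1)).card = 0 := by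
      have := hlc
      unfold leafCount at this
      omega
    rw [Finset.card_eq_zero] at hz
    rw [hz] at this
    exact absurd this (Finset.notMem_empty v)
  | succ k ih =>
    intro S hlc hforce heq
    by_cases hk : leafCount T S ≤ k
    · exact ih S hk hforce heq
    -- there is a leaf in S
    have hpos : 0 < (S.filter (fun v => (T.neighborSet v).ncard = 1)).card := by
      unfold leafCount at hk
      omega
    obtain ⟨v, hvf⟩ := Finset.card_pos.mp hpos
    obtain ⟨hvS, hvleaf⟩ := Finset.mem_filter.mp hvf
    obtain ⟨u, hN⟩ := Set.ncard_eq_one.mp hvleaf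
    have hadj : T.Adj v u := by
      have : u ∈ T.neighborSet v := by rw [hN]; rfl
      exact this
    have huv : u ≠ v := hadj.ne'
    have hunleaf : (T.neighborSet u).ncard ≠ 1 := neighbor_not_leaf T hc hn hN
    by_cases huS : u ∈ S
    · -- remove v
      set S' : Finset V := S.erase v with hS'
      have hcoe : (↑S' : Set V) = (↑S : Set V) \ {v} := by
        rw [hS', Finset.coe_erase]
      have hvS' : v ∉ (↑S' : Set V) := by rw [hcoe]; exact fun h => h.2 rfl
      have huS' : u ∈ (↑S' : Set V) := by
        rw [hcoe]; exact ⟨huS, huv⟩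
      have hSsub : (↑S : Set V) ⊆ psdStep T ↑S' := by
        intro x hx
        by_cases hxv : x = v
        · subst hxv
          exact Or.inr ⟨u, leaf_forces T hN huS' hvS'⟩
        · exact Or.inl (by rw [hcoe]; exact ⟨hx, hxv⟩)
      have hstep : ∀ t, (psdStep T)^[t] (↑S : Set V) ⊆ (psdStep T)^[t + 1] (↑S' : Set V) := by
        intro t
        rw [Function.iterate_succ_apply]
        exact psdStep_iterate_mono T hSsub t
      have hforce' : IsPSDForcingSet T ↑S' := by
        refine ⟨psdPt T ↑S + 1, Set.eq_univ_of_univ_subset ?_⟩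
        rw [← psdPt_spec T hforce]
        exact hstep _
      have hpt' : psdPt T ↑S' ≤ psdPt T ↑S + 1 := psdPt_le T (by
        apply Set.eq_univ_of_univ_subset
        rw [← psdPt_spec T hforce]
        exact hstep _)
      have hcard' : S'.card = S.card - 1 := Finset.card_erase_of_mem hvS
      have hcardpos : 1 ≤ S.card := Finset.card_pos.mpr ⟨v, hvS⟩
      have hle1 : psdTh T ≤ S'.card + psdPt T ↑S' := psdTh_le T hforce'
      have heq' : psdTh T = S'.card + psdPt T ↑S' := by omega
      have hlc' : leafCount T S' ≤ k := by
        have hfe : S'.filter (fun v => (T.neighborSet v).ncard = 1)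
            = (S.filter (fun v => (T.neighborSet v).ncard = 1)).erase v := by
          rw [hS', Finset.filter_erase]
        have : leafCount T S' < leafCount T S := by
          unfold leafCount
          rw [hfe]
          exact Finset.card_erase_lt_of_mem hvf
        omega
      exact ih S' hlc' hforce' heq'
    · -- swap v for u
      set S' : Finset V := insert u (S.erase v) with hS'
      have hcoe : (↑S' : Set V) = insert u ((↑S : Set V) \ {v}) := by
        rw [hS', Finset.coe_insert, Finset.coe_erase]
      have hswap : psdStep T (↑S : Set V) ⊆ psdStep T ↑S' := by
        rw [hcoe]
        exact step_subset_swap T hN hvS (fun h => huS h)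
      have hptpos : psdPt T ↑S ≠ 0 := by
        intro h0
        have hu2 := psdPt_spec T hforce
        rw [h0] at hu2
        simp only [Function.iterate_zero, id_eq] at hu2
        apply huS
        have hu3 : u ∈ (↑S : Set V) := by rw [hu2]; trivial
        exact_mod_cast hu3
      obtain ⟨t, ht⟩ : ∃ t, psdPt T ↑S = t + 1 := ⟨psdPt T ↑S - 1, by omega⟩
      have hstep : (psdStep T)^[t + 1] (↑S : Set V) ⊆ (psdStep T)^[t + 1] (↑S' : Set V) := by
        rw [Function.iterate_succ_apply, Function.iterate_succ_apply]
        exact psdStep_iterate_mono T hswap t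
      have hforce' : IsPSDForcingSet T ↑S' := by
        refine ⟨t + 1, Set.eq_univ_of_univ_subset ?_⟩
        have := psdPt_spec T hforce
        rw [ht] at this
        rw [← this]
        exact hstep
      have hpt' : psdPt T ↑S' ≤ psdPt T ↑S := by
        rw [ht]
        refine psdPt_le T (Set.eq_univ_of_univ_subset ?_)
        have := psdPt_spec T hforce
        rw [ht] at this
        rw [← this]
        exact hstep
      have huSe : u ∉ S.erase v := fun h => huS (Finset.mem_of_mem_erase h)
      have hcard' : S'.card = S.card := by
        rw [hS', Finset.card_insert_of_notMem huSe, Finset.card_erase_of_mem hvS]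
        have : 1 ≤ S.card := Finset.card_pos.mpr ⟨v, hvS⟩
        omega
      have hle1 : psdTh T ≤ S'.card + psdPt T ↑S' := psdTh_le T hforce'
      have heq' : psdTh T = S'.card + psdPt T ↑S' := by omega
      have hlc' : leafCount T S' ≤ k := by
        have hfe : S'.filter (fun v => (T.neighborSet v).ncard = 1)
            = (S.filter (fun v => (T.neighborSet v).ncard = 1)).erase v := by
          rw [hS', Finset.filter_insert, if_neg hunleaf, Finset.filter_erase]
        have : leafCount T S' < leafCount T S := by
          unfold leafCount
          rw [hfe]
          exact Finset.card_erase_lt_of_mem hvf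
        omega
      exact ih S' hlc' hforce' heq'

theorem stmt_11 {V : Type*} [Fintype V] (T : SimpleGraph V) (hT : T.IsTree)
    (hn : 3 ≤ Fintype.card V) :
    ∃ S : Finset V, (∀ v ∈ S, (T.neighborSet v).ncard ≠ 1) ∧
      IsPSDForcingSet T ↑S ∧ psdTh T = S.card + psdPt T ↑S := by
  obtain ⟨S, hforce, heq⟩ := psdTh_exists T
  exact main_aux T hT.isConnected hn (leafCount T S) S le_rfl hforce heq
end

section
/- For all Δ ≥ 3 and h ≥ 2, the tree T(Δ,h) in which every vertex has degree Δ or 1 and every leaf is at distance exactly h from the center has order n = (Δ(Δ−1)^h − 2)/(Δ − 2) and satisfies th₊(T(Δ,h)) = h + 1 = 1 + log_{Δ−1}((Δ−2)n + 2)/Δ); hence the lower bound th₊(G) ≥ ⌈1 + log_{Δ−1}(((Δ−2)n + 2)/Δ)⌉ is tight. -/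
open SimpleGraph

section Aux

variable {V : Type*} {T : SimpleGraph V}

/-- In a tree, adjacent vertices have distances to `c` differing by exactly one. -/
lemma tree_adj_dist (hT : T.IsTree) (c : V) {u v : V} (h : T.Adj u v) :
    T.dist c v = T.dist c u + 1 ∨ T.dist c u = T.dist c v + 1 := by
  classical
  obtain ⟨p, hp⟩ := hT.isConnected.exists_walk_length_eq_dist c u
  by_cases hv : v ∈ p.support
  · right
    have h1 : T.dist c v ≤ (p.takeUntil v hv).length := dist_le _
    have h2 : T.dist v u ≤ (p.dropUntil v hv).length := dist_le _
    have hlen : (p.takeUntil v hv).length + (p.dropUntil v hv).length = p.length := by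
      have := congrArg Walk.length (p.take_spec hv)
      rwa [Walk.length_append] at this
    have htri : T.dist c u ≤ T.dist c v + T.dist v u := hT.isConnected.dist_triangle
    have hd1 : T.dist v u ≤ 1 := by
      simpa using dist_le (Walk.cons h.symm Walk.nil)
    have hne : T.dist v u ≠ 0 := by
      rw [ne_eq, hT.isConnected.dist_eq_zero_iff]
      rintro rfl
      exact T.irrefl h
    omega
  · left
    have hp' : p.IsPath := p.isPath_of_length_eq_dist hp
    have hq : (p.concat h).IsPath := by
      rw [← Walk.isPath_reverse_iff, Walk.reverse_concat]
      exact Walk.IsPath.cons hp'.reverse (by simpa using hv)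
    obtain ⟨q, hq', hq''⟩ := hT.isConnected.exists_path_of_dist c v
    have hpq : p.concat h = q :=
      congrArg Subtype.val (hT.IsAcyclic.path_unique ⟨p.concat h, hq⟩ ⟨q, hq'⟩)
    have := congrArg Walk.length hpq
    rw [Walk.length_concat] at this
    omega

/-- In a connected graph, every vertex at positive distance from `c` has a neighbor
one step closer to `c`. -/
lemma exists_parent (hc : T.Connected) (c v : V) (hd : T.dist c v ≠ 0) :
    ∃ u, T.Adj u v ∧ T.dist c u + 1 = T.dist c v := by
  obtain ⟨p, hp⟩ := hc.exists_walk_length_eq_dist c v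
  have hpos : 0 < p.length := by omega
  set q := p.reverse with hq
  have hqlen : q.length = p.length := p.length_reverse
  have hqn : ¬ q.Nil := by rw [Walk.not_nil_iff_lt_length]; omega
  refine ⟨q.getVert 1, (q.adj_snd hqn).symm, ?_⟩
  · have h1 : T.dist (q.getVert 1) c ≤ q.tail.length := dist_le q.tail
    have h2 : q.tail.length + 1 = q.length := q.length_tail_add_one hqn
    have htri : T.dist c v ≤ T.dist c (q.getVert 1) + T.dist (q.getVert 1) v :=
      hc.dist_triangle
    have hd1 : T.dist (q.getVert 1) v = 1 :=
      dist_eq_one_iff_adj.mpr (q.adj_snd hqn).symm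
    have h4 : T.dist c (q.getVert 1) = T.dist (q.getVert 1) c :=
      dist_comm (u := c) (v := q.getVert 1)
    omega

/-- In a tree, the neighbor one step closer to `c` is unique. -/
lemma parent_unique (hT : T.IsTree) {c v u₁ u₂ : V} (h1 : T.Adj u₁ v) (h2 : T.Adj u₂ v)
    (hd1 : T.dist c u₁ + 1 = T.dist c v) (hd2 : T.dist c u₂ + 1 = T.dist c v) : u₁ = u₂ := by
  classical
  obtain ⟨p₁, hp₁, hl₁⟩ := hT.isConnected.exists_path_of_dist c u₁
  obtain ⟨p₂, hp₂, hl₂⟩ := hT.isConnected.exists_path_of_dist c u₂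
  have hv₁ : v ∉ p₁.support := by
    intro hv
    have := Walk.length_takeUntil_le p₁ hv
    have := dist_le (p₁.takeUntil v hv)
    omega
  have hv₂ : v ∉ p₂.support := by
    intro hv
    have := Walk.length_takeUntil_le p₂ hv
    have := dist_le (p₂.takeUntil v hv)
    omega
  have hq₁ : (p₁.concat h1).IsPath := by
    rw [← Walk.isPath_reverse_iff, Walk.reverse_concat]
    exact Walk.IsPath.cons hp₁.reverse (by simpa using hv₁)
  have hq₂ : (p₂.concat h2).IsPath := by
    rw [← Walk.isPath_reverse_iff, Walk.reverse_concat]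
    exact Walk.IsPath.cons hp₂.reverse (by simpa using hv₂)
  have heq : p₁.concat h1 = p₂.concat h2 :=
    congrArg Subtype.val (hT.IsAcyclic.path_unique ⟨p₁.concat h1, hq₁⟩ ⟨p₂.concat h2, hq₂⟩)
  have := congrArg (fun w : T.Walk c v => w.reverse.getVert 1) heq
  simpa [Walk.reverse_concat, Walk.snd_cons] using this

open Classical in
noncomputable def parentFn (T : SimpleGraph V) (c v : V) : V :=
  if h : ∃ u, T.Adj u v ∧ T.dist c u + 1 = T.dist c v then h.choose else v

lemma parentFn_spec (hc : T.Connected) {c v : V} (hd : T.dist c v ≠ 0) :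
    T.Adj (parentFn T c v) v ∧ T.dist c (parentFn T c v) + 1 = T.dist c v := by
  have h : ∃ u, T.Adj u v ∧ T.dist c u + 1 = T.dist c v := exists_parent hc c v hd
  rw [parentFn]
  rw [dif_pos h]
  exact h.choose_spec

lemma parentFn_eq (hT : T.IsTree) {c v u : V} (hu : T.Adj u v)
    (hd : T.dist c u + 1 = T.dist c v) : parentFn T c v = u := by
  have hd0 : T.dist c v ≠ 0 := by omega
  obtain ⟨ha, hb⟩ := parentFn_spec hT.isConnected (c := c) hd0
  exact parent_unique hT ha hu hb hd

open Classical in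
noncomputable def sphereF (T : SimpleGraph V) [Fintype V] (c : V) (k : ℕ) : Finset V :=
  Finset.univ.filter fun v => T.dist c v = k

open Classical in
noncomputable def ballF (T : SimpleGraph V) [Fintype V] (c : V) (k : ℕ) : Finset V :=
  Finset.univ.filter fun v => T.dist c v ≤ k

lemma mem_sphereF [Fintype V] {c v : V} {k : ℕ} : v ∈ sphereF T c k ↔ T.dist c v = k := by
  classical simp [sphereF]

lemma mem_ballF [Fintype V] {c v : V} {k : ℕ} : v ∈ ballF T c k ↔ T.dist c v ≤ k := by
  classical simp [ballF]

lemma degree_eq_ncard [Fintype V] [DecidableRel T.Adj] (v : V) :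
    (T.neighborFinset v).card = (T.neighborSet v).ncard := by
  rw [neighborFinset_def, Set.ncard_eq_toFinset_card']

variable [Fintype V]

lemma sphere_step_exact (hT : T.IsTree) {Δ h : ℕ} (hh : 2 ≤ h) (c : V)
    (hdeg : ∀ v, (T.neighborSet v).ncard = Δ ∨ (T.neighborSet v).ncard = 1)
    (hleaf : ∀ v, (T.neighborSet v).ncard = 1 ↔ T.dist c v = h)
    {k : ℕ} (hk1 : 1 ≤ k) (hkh : k < h) :
    (sphereF T c (k + 1)).card = (Δ - 1) * (sphereF T c k).card := by
  classical
  have hmap : ∀ v ∈ sphereF T c (k + 1), parentFn T c v ∈ sphereF T c k := by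
    intro v hv
    rw [mem_sphereF] at hv ⊢
    have := (parentFn_spec hT.isConnected (c := c) (v := v) (by omega)).2
    omega
  rw [Finset.card_eq_sum_card_fiberwise hmap]
  have hfib : ∀ u ∈ sphereF T c k,
      ((sphereF T c (k + 1)).filter fun v => parentFn T c v = u).card = Δ - 1 := by
    intro u hu
    rw [mem_sphereF] at hu
    have hu0 : T.dist c u ≠ 0 := by omega
    obtain ⟨hpadj, hpd⟩ := parentFn_spec hT.isConnected (c := c) (v := u) hu0
    have hset : ((sphereF T c (k + 1)).filter fun v => parentFn T c v = u)
        = T.neighborFinset u \ {parentFn T c u} := by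
      ext v
      simp only [Finset.mem_filter, mem_sphereF, Finset.mem_sdiff, mem_neighborFinset,
        Finset.mem_singleton]
      constructor
      · rintro ⟨hv, hpar⟩
        obtain ⟨ha, hd⟩ := parentFn_spec hT.isConnected (c := c) (v := v) (by omega)
        rw [hpar] at ha hd
        refine ⟨ha, fun hvp => ?_⟩
        have : T.dist c v = T.dist c (parentFn T c u) := by rw [hvp]
        omega
      · rintro ⟨hadj, hvp⟩
        rcases tree_adj_dist hT c hadj with hcase | hcase
        · refine ⟨by omega, parentFn_eq hT hadj (by omega)⟩
        · exact absurd (parentFn_eq hT hadj.symm (by omega)).symm hvp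
    rw [hset, Finset.card_sdiff_of_subset (by simpa using hpadj.symm)]
    have hdegu : (T.neighborFinset u).card = Δ := by
      rw [degree_eq_ncard]
      rcases hdeg u with h' | h'
      · exact h'
      · exact absurd ((hleaf u).mp h') (by omega)
    rw [hdegu, Finset.card_singleton]
  rw [Finset.sum_congr rfl hfib, Finset.sum_const, smul_eq_mul, mul_comm]

lemma sphere_zero (hT : T.IsTree) (c : V) : sphereF T c 0 = {c} := by
  classical
  ext v
  rw [mem_sphereF, Finset.mem_singleton]
  constructor
  · intro h0
    exact ((hT.isConnected.dist_eq_zero_iff (u := c) (v := v)).mp h0).symm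
  · rintro rfl
    exact dist_self

lemma sphere_one [DecidableRel T.Adj] (c : V) : sphereF T c 1 = T.neighborFinset c := by
  classical
  ext v
  rw [mem_sphereF, mem_neighborFinset, dist_eq_one_iff_adj]

lemma sphere_card_exact (hT : T.IsTree) {Δ h : ℕ} (hΔ : 3 ≤ Δ) (hh : 2 ≤ h) (c : V)
    (hdeg : ∀ v, (T.neighborSet v).ncard = Δ ∨ (T.neighborSet v).ncard = 1)
    (hleaf : ∀ v, (T.neighborSet v).ncard = 1 ↔ T.dist c v = h)
    {k : ℕ} (hk1 : 1 ≤ k) (hkh : k ≤ h) :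
    (sphereF T c k).card = Δ * (Δ - 1) ^ (k - 1) := by
  classical
  induction k with
  | zero => omega
  | succ k ih =>
    rcases Nat.eq_or_lt_of_le hk1 with h1 | h1
    · -- k + 1 = 1
      have hk0 : k = 0 := by omega
      subst hk0
      rw [sphere_one, degree_eq_ncard, pow_zero, mul_one]
      rcases hdeg c with h' | h'
      · exact h'
      · have := (hleaf c).mp h'
        rw [dist_self] at this
        omega
    · have hk1' : 1 ≤ k := by omega
      rw [sphere_step_exact hT hh c hdeg hleaf hk1' (by omega), ih hk1' (by omega)]
      have : k - 1 + 1 = k := by omega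
      rw [show k + 1 - 1 = k - 1 + 1 by omega, pow_succ, ← this]
      ring

lemma card_V_eq (hT : T.IsTree) {Δ h : ℕ} (hΔ : 3 ≤ Δ) (hh : 2 ≤ h) (c : V)
    (hdeg : ∀ v, (T.neighborSet v).ncard = Δ ∨ (T.neighborSet v).ncard = 1)
    (hleaf : ∀ v, (T.neighborSet v).ncard = 1 ↔ T.dist c v = h)
    (hecc : ∀ v, T.dist c v ≤ h) :
    Fintype.card V = 1 + Δ * ∑ i ∈ Finset.range h, (Δ - 1) ^ i := by
  classical
  have hpart : Fintype.card V = ∑ k ∈ Finset.range (h + 1), (sphereF T c k).card := by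
    rw [← Finset.card_univ]
    rw [Finset.card_eq_sum_card_fiberwise (f := fun v => T.dist c v)
      (t := Finset.range (h + 1)) (fun v _ => Finset.mem_range.mpr (Nat.lt_succ_of_le (hecc v)))]
    refine Finset.sum_congr rfl fun k _ => ?_
    congr 1
  rw [hpart, Finset.sum_range_succ']
  have h0 : (sphereF T c 0).card = 1 := by rw [sphere_zero hT]; simp
  have hsucc : ∀ i ∈ Finset.range h, (sphereF T c (i + 1)).card = Δ * (Δ - 1) ^ i := by
    intro i hi
    rw [Finset.mem_range] at hi
    rw [sphere_card_exact hT hΔ hh c hdeg hleaf (by omega) (by omega)]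
    simp
  rw [Finset.sum_congr rfl hsucc, h0, ← Finset.mul_sum]
  omega

lemma sphere_step_le (hT : T.IsTree) {Δ : ℕ} (hΔ : 3 ≤ Δ)
    (hdeg : ∀ v, (T.neighborSet v).ncard = Δ ∨ (T.neighborSet v).ncard = 1)
    (s : V) {k : ℕ} (hk1 : 1 ≤ k) :
    (sphereF T s (k + 1)).card ≤ (Δ - 1) * (sphereF T s k).card := by
  classical
  have hmap : ∀ v ∈ sphereF T s (k + 1), parentFn T s v ∈ sphereF T s k := by
    intro v hv
    rw [mem_sphereF] at hv ⊢
    have := (parentFn_spec hT.isConnected (c := s) (v := v) (by omega)).2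
    omega
  rw [Finset.card_eq_sum_card_fiberwise hmap]
  have hfib : ∀ u ∈ sphereF T s k,
      ((sphereF T s (k + 1)).filter fun v => parentFn T s v = u).card ≤ Δ - 1 := by
    intro u hu
    rw [mem_sphereF] at hu
    have hu0 : T.dist s u ≠ 0 := by omega
    obtain ⟨hpadj, hpd⟩ := parentFn_spec hT.isConnected (c := s) (v := u) hu0
    have hsub : ((sphereF T s (k + 1)).filter fun v => parentFn T s v = u)
        ⊆ T.neighborFinset u \ {parentFn T s u} := by
      intro v hv
      rw [Finset.mem_filter, mem_sphereF] at hv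
      obtain ⟨hv, hpar⟩ := hv
      obtain ⟨ha, hd⟩ := parentFn_spec hT.isConnected (c := s) (v := v) (by omega)
      rw [hpar] at ha hd
      rw [Finset.mem_sdiff, mem_neighborFinset, Finset.mem_singleton]
      refine ⟨ha, fun hvp => ?_⟩
      have : T.dist s v = T.dist s (parentFn T s u) := by rw [hvp]
      omega
    calc ((sphereF T s (k + 1)).filter fun v => parentFn T s v = u).card
        ≤ (T.neighborFinset u \ {parentFn T s u}).card := Finset.card_le_card hsub
      _ = (T.neighborFinset u).card - 1 := by
          rw [Finset.card_sdiff_of_subset (by simpa using hpadj.symm), Finset.card_singleton]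
      _ ≤ Δ - 1 := by
          rw [degree_eq_ncard]
          rcases hdeg u with h' | h' <;> omega
  calc ∑ u ∈ sphereF T s k,
        ((sphereF T s (k + 1)).filter fun v => parentFn T s v = u).card
      ≤ ∑ _u ∈ sphereF T s k, (Δ - 1) := Finset.sum_le_sum hfib
    _ = (Δ - 1) * (sphereF T s k).card := by rw [Finset.sum_const, smul_eq_mul, mul_comm]

lemma sphere_card_le (hT : T.IsTree) {Δ : ℕ} (hΔ : 3 ≤ Δ)
    (hdeg : ∀ v, (T.neighborSet v).ncard = Δ ∨ (T.neighborSet v).ncard = 1)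
    (s : V) (k : ℕ) :
    (sphereF T s (k + 1)).card ≤ Δ * (Δ - 1) ^ k := by
  classical
  induction k with
  | zero =>
    have : sphereF T s 1 ⊆ T.neighborFinset s := by
      intro v hv
      rw [mem_sphereF] at hv
      rw [mem_neighborFinset]
      exact dist_eq_one_iff_adj.mp hv
    have h1 := Finset.card_le_card this
    rw [degree_eq_ncard] at h1
    have : (T.neighborSet s).ncard ≤ Δ := by rcases hdeg s with h' | h' <;> omega
    simpa using h1.trans this
  | succ k ih =>
    calc (sphereF T s (k + 1 + 1)).card ≤ (Δ - 1) * (sphereF T s (k + 1)).card :=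
          sphere_step_le hT hΔ hdeg s (by omega)
      _ ≤ (Δ - 1) * (Δ * (Δ - 1) ^ k) := Nat.mul_le_mul_left _ ih
      _ = Δ * (Δ - 1) ^ (k + 1) := by ring

lemma ball_card_le (hT : T.IsTree) {Δ : ℕ} (hΔ : 3 ≤ Δ)
    (hdeg : ∀ v, (T.neighborSet v).ncard = Δ ∨ (T.neighborSet v).ncard = 1)
    (s : V) (t : ℕ) :
    (ballF T s t).card ≤ 1 + Δ * ∑ i ∈ Finset.range t, (Δ - 1) ^ i := by
  classical
  have hsub : ballF T s t ⊆ (Finset.range (t + 1)).biUnion (sphereF T s) := by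
    intro v hv
    rw [mem_ballF] at hv
    rw [Finset.mem_biUnion]
    exact ⟨T.dist s v, Finset.mem_range.mpr (by omega), mem_sphereF.mpr rfl⟩
  calc (ballF T s t).card ≤ ((Finset.range (t + 1)).biUnion (sphereF T s)).card :=
        Finset.card_le_card hsub
    _ ≤ ∑ k ∈ Finset.range (t + 1), (sphereF T s k).card := Finset.card_biUnion_le
    _ ≤ 1 + Δ * ∑ i ∈ Finset.range t, (Δ - 1) ^ i := by
        rw [Finset.sum_range_succ']
        have h0 : (sphereF T s 0).card ≤ 1 := by
          have : sphereF T s 0 ⊆ {s} := by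
            intro v hv
            rw [mem_sphereF] at hv
            rw [Finset.mem_singleton]
            exact ((hT.isConnected.dist_eq_zero_iff).mp hv).symm
          simpa using Finset.card_le_card this
        have hs : ∑ i ∈ Finset.range t, (sphereF T s (i + 1)).card
            ≤ ∑ i ∈ Finset.range t, Δ * (Δ - 1) ^ i :=
          Finset.sum_le_sum fun i _ => sphere_card_le hT hΔ hdeg s i
        rw [← Finset.mul_sum] at hs
        omega


lemma offReach_walk {B : Set V} {u w : V} (h : offReach T B u w) (hu : u ∉ B) :
    ∃ p : T.Walk u w, ∀ x ∈ p.support, x ∉ B := by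
  induction h with
  | refl => exact ⟨Walk.nil, by simpa using hu⟩
  | tail _ hstep ih =>
    obtain ⟨hadj, _, hc⟩ := hstep
    obtain ⟨p, hp⟩ := ih
    refine ⟨p.concat hadj, ?_⟩
    intro x hx
    rw [Walk.support_concat, List.mem_append, List.mem_singleton] at hx
    rcases hx with hx | rfl
    · exact hp x hx
    · exact hc

/-- One PSD step from any superset of the ball of radius `i` captures the ball of
radius `i + 1`. -/
lemma psdStep_ball (hT : T.IsTree) (c : V) (i : ℕ) {B : Set V}
    (hB : {v | T.dist c v ≤ i} ⊆ B) :
    {v | T.dist c v ≤ i + 1} ⊆ psdStep T B := by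
  classical
  intro w hw
  simp only [Set.mem_setOf_eq] at hw
  by_cases hwB : w ∈ B
  · exact Or.inl hwB
  have hdw : T.dist c w = i + 1 := by
    rcases Nat.lt_or_ge (T.dist c w) (i + 1) with h' | h'
    · exact absurd (hB (by simpa using Nat.lt_succ_iff.mp h')) hwB
    · omega
  obtain ⟨hpadj, hpd⟩ := parentFn_spec hT.isConnected (c := c) (v := w) (by omega)
  set v := parentFn T c w with hv
  have hvB : v ∈ B := hB (by simp only [Set.mem_setOf_eq]; omega)
  refine Or.inr ⟨v, hvB, hwB, hpadj, ?_⟩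
  intro u huB huadj hreach
  by_contra hne
  -- u is another child of v
  have hdu : T.dist c u = i + 1 := by
    have h1 : ¬ T.dist c u ≤ i := fun h' => huB (hB h')
    have h2 : T.dist c u ≤ T.dist c v + T.dist v u := hT.isConnected.dist_triangle
    have h3 : T.dist v u = 1 := dist_eq_one_iff_adj.mpr huadj
    omega
  obtain ⟨p, hp⟩ := offReach_walk hreach huB
  -- the path u - v - w
  have hpath : (Walk.cons huadj.symm (Walk.cons hpadj Walk.nil) : T.Walk u w).IsPath := by
    rw [Walk.cons_isPath_iff]
    constructor
    · rw [Walk.cons_isPath_iff]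
      exact ⟨Walk.IsPath.nil, by simpa using hpadj.ne⟩
    · simp [huadj.ne', hne]
  have hbp : p.bypass = Walk.cons huadj.symm (Walk.cons hpadj Walk.nil) :=
    congrArg Subtype.val
      (hT.IsAcyclic.path_unique ⟨p.bypass, p.bypass_isPath⟩ ⟨_, hpath⟩)
  have hvmem : v ∈ p.bypass.support := by
    rw [hbp]
    simp
  exact hp v (p.support_bypass_subset hvmem) hvB

lemma ball_subset_iterate (hT : T.IsTree) (c : V) (i : ℕ) :
    {v | T.dist c v ≤ i} ⊆ (psdStep T)^[i] {c} := by
  induction i with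
  | zero =>
    intro v hv
    simp only [Set.mem_setOf_eq, Nat.le_zero] at hv
    have : c = v := (hT.isConnected.dist_eq_zero_iff).mp hv
    simp [Function.iterate_zero, ← this]
  | succ i ih =>
    rw [Function.iterate_succ_apply']
    exact psdStep_ball hT c i ih

lemma psdStep_mono_superset (B : Set V) : B ⊆ psdStep T B := Set.subset_union_left

lemma spread (hc : T.Connected) (B : Set V) :
    ∀ i, ∀ x ∈ (psdStep T)^[i] B, ∃ s ∈ B, T.dist s x ≤ i := by
  intro i
  induction i with
  | zero => exact fun x hx => ⟨x, by simpa using hx, by simp [dist_self]⟩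
  | succ i ih =>
    intro x hx
    rw [Function.iterate_succ_apply'] at hx
    rcases hx with hx | ⟨v, hv, _, hadj, _⟩
    · obtain ⟨s, hs, hd⟩ := ih x hx
      exact ⟨s, hs, by omega⟩
    · obtain ⟨s, hs, hd⟩ := ih v hv
      refine ⟨s, hs, ?_⟩
      have h1 : T.dist s x ≤ T.dist s v + T.dist v x := hc.dist_triangle
      have h2 : T.dist v x = 1 := dist_eq_one_iff_adj.mpr hadj
      omega

lemma psdStep_empty : psdStep T ∅ = ∅ := by
  simp [psdStep, psdForces]

lemma two_le_geom {m : ℕ} (hm : 1 ≤ m) : m ≤ 2 ^ (m - 1) := by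
  induction m with
  | zero => omega
  | succ m ih =>
    cases Nat.eq_zero_or_pos m with
    | inl h0 => subst h0; simp
    | inr h1 =>
      have h2 := ih h1
      have h3 : 2 ^ (m - 1) * 2 = 2 ^ m := by
        rw [← pow_succ]; congr 1; omega
      have h4 : m + 1 ≤ 2 ^ m := by omega
      simpa [Nat.succ_sub_one] using h4

lemma geom_identity {x : ℕ} (hx : 1 ≤ x) (h : ℕ) :
    (∑ i ∈ Finset.range h, x ^ i) * (x - 1) + 1 = x ^ h := by
  obtain ⟨y, rfl⟩ : ∃ y, x = y + 1 := ⟨x - 1, by omega⟩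
  induction h with
  | zero => simp
  | succ h ih =>
    rw [Finset.sum_range_succ, add_mul, pow_succ]
    simp only [Nat.add_sub_cancel] at ih ⊢
    nlinarith [ih]

lemma ball_bound_pow {x : ℕ} (hx : 2 ≤ x) (t : ℕ) :
    1 + (x + 1) * ∑ i ∈ Finset.range t, x ^ i ≤ (x + 1) * x ^ t := by
  induction t with
  | zero => simp
  | succ t ih =>
    rw [Finset.sum_range_succ, Nat.mul_add, pow_succ, ← mul_assoc]
    have h2 : (x + 1) * x ^ t * 2 ≤ (x + 1) * x ^ t * x := Nat.mul_le_mul_left _ hx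
    omega

lemma arith_lt {Δ m t h : ℕ} (hΔ : 3 ≤ Δ) (hm : 1 ≤ m) (hmt : m + t ≤ h) :
    m * (1 + Δ * ∑ i ∈ Finset.range t, (Δ - 1) ^ i)
      < 1 + Δ * ∑ i ∈ Finset.range h, (Δ - 1) ^ i := by
  obtain ⟨x, rfl⟩ : ∃ x, Δ = x + 1 := ⟨Δ - 1, by omega⟩
  have hx : 2 ≤ x := by omega
  simp only [Nat.add_sub_cancel]
  have h1 : m * (1 + (x + 1) * ∑ i ∈ Finset.range t, x ^ i) ≤ m * ((x + 1) * x ^ t) :=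
    Nat.mul_le_mul_left m (ball_bound_pow hx t)
  have h2 : m ≤ x ^ (m - 1) := (two_le_geom hm).trans (Nat.pow_le_pow_left hx (m - 1))
  have h3 : m * ((x + 1) * x ^ t) ≤ x ^ (m - 1) * ((x + 1) * x ^ t) :=
    Nat.mul_le_mul_right _ h2
  have h4 : x ^ (m - 1) * ((x + 1) * x ^ t) = (x + 1) * x ^ (m - 1 + t) := by
    rw [pow_add]; ring
  have h5 : x ^ (m - 1 + t) ≤ x ^ (h - 1) := Nat.pow_le_pow_right (by omega) (by omega)
  have h6 : x ^ (h - 1) ≤ ∑ i ∈ Finset.range h, x ^ i := by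
    refine Finset.single_le_sum (f := fun i => x ^ i) (fun i _ => Nat.zero_le _) ?_
    exact Finset.mem_range.mpr (by omega)
  have h7 : (x + 1) * x ^ (m - 1 + t) ≤ (x + 1) * ∑ i ∈ Finset.range h, x ^ i :=
    Nat.mul_le_mul_left _ (h5.trans h6)
  omega

lemma n_formula {Δ : ℕ} (hΔ : 3 ≤ Δ) (h : ℕ) :
    (Δ - 2) * (1 + Δ * ∑ i ∈ Finset.range h, (Δ - 1) ^ i) + 2 = Δ * (Δ - 1) ^ h := by
  obtain ⟨y, rfl⟩ : ∃ y, Δ = y + 2 := ⟨Δ - 2, by omega⟩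
  have e1 : y + 2 - 1 = y + 1 := by omega
  have e2 : y + 2 - 2 = y := by omega
  rw [e1, e2]
  have hg : (∑ i ∈ Finset.range h, (y + 1) ^ i) * (y + 1 - 1) + 1 = (y + 1) ^ h :=
    geom_identity (by omega) h
  rw [Nat.add_sub_cancel] at hg
  rw [← hg]
  ring

lemma n_div {Δ : ℕ} (hΔ : 3 ≤ Δ) (h : ℕ) :
    (Δ * (Δ - 1) ^ h - 2) / (Δ - 2) = 1 + Δ * ∑ i ∈ Finset.range h, (Δ - 1) ^ i := by
  have hf := n_formula hΔ h
  have h2 : Δ * (Δ - 1) ^ h - 2 = (Δ - 2) * (1 + Δ * ∑ i ∈ Finset.range h, (Δ - 1) ^ i) :=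
    Nat.sub_eq_of_eq_add hf.symm
  rw [h2, Nat.mul_div_cancel_left _ (by omega : 0 < Δ - 2)]



end Aux

theorem stmt_15 {V : Type*} [Fintype V] (T : SimpleGraph V) (hT : T.IsTree)
    (Δ h : ℕ) (hΔ : 3 ≤ Δ) (hh : 2 ≤ h) (c : V)
    (hdeg : ∀ v, (T.neighborSet v).ncard = Δ ∨ (T.neighborSet v).ncard = 1)
    (hleaf : ∀ v, (T.neighborSet v).ncard = 1 ↔ T.dist c v = h)
    (hecc : ∀ v, T.dist c v ≤ h) :
    Fintype.card V = (Δ * (Δ - 1) ^ h - 2) / (Δ - 2) ∧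
    psdTh T = h + 1 ∧
    ((h : ℝ) + 1 = 1 + Real.logb ((Δ : ℝ) - 1)
      ((((Δ : ℝ) - 2) * Fintype.card V + 2) / (Δ : ℝ))) := by
  classical
  have hc := hT.isConnected
  have hcard : Fintype.card V = 1 + Δ * ∑ i ∈ Finset.range h, (Δ - 1) ^ i :=
    card_V_eq hT hΔ hh c hdeg hleaf hecc
  have huniv : (psdStep T)^[h] (↑({c} : Finset V) : Set V) = Set.univ := by
    apply Set.eq_univ_of_univ_subset
    intro v _
    have := ball_subset_iterate hT c h (show v ∈ {x | T.dist c x ≤ h} from hecc v)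
    simpa using this
  have hforce : IsPSDForcingSet T ↑({c} : Finset V) := ⟨h, huniv⟩
  refine ⟨by rw [hcard, n_div hΔ h], ?_, ?_⟩
  · have hptle : psdPt T ↑({c} : Finset V) ≤ h := Nat.sInf_le huniv
    have hmem : ({c} : Finset V).card + psdPt T ↑({c} : Finset V) ∈
        {k | ∃ S : Finset V, IsPSDForcingSet T ↑S ∧ k = S.card + psdPt T ↑S} :=
      ⟨{c}, hforce, rfl⟩
    have hupper : psdTh T ≤ h + 1 := by
      have h1 := Nat.sInf_le hmem
      rw [Finset.card_singleton] at h1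
      calc psdTh T ≤ 1 + psdPt T ↑({c} : Finset V) := h1
        _ ≤ h + 1 := by omega
    have hlower : ∀ k ∈ {k | ∃ S : Finset V, IsPSDForcingSet T ↑S ∧
        k = S.card + psdPt T ↑S}, h + 1 ≤ k := by
      rintro k ⟨S, hS, rfl⟩
      have ht : (psdStep T)^[psdPt T ↑S] ↑S = Set.univ := Nat.sInf_mem hS
      have hm1 : 1 ≤ S.card := by
        rcases Nat.eq_zero_or_pos S.card with h0 | h0
        · exfalso
          rw [Finset.card_eq_zero] at h0
          subst h0
          rw [Finset.coe_empty, Function.iterate_fixed psdStep_empty] at ht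
          have : c ∈ (∅ : Set V) := ht ▸ Set.mem_univ c
          exact this
        · exact h0
      by_contra hcon
      push_neg at hcon
      have hcover : (Finset.univ : Finset V) ⊆ S.biUnion fun s => ballF T s (psdPt T ↑S) := by
        intro v _
        have hv : v ∈ (psdStep T)^[psdPt T ↑S] ↑S := ht.symm ▸ Set.mem_univ v
        obtain ⟨s, hs, hd⟩ := spread hc ↑S (psdPt T ↑S) v hv
        exact Finset.mem_biUnion.mpr ⟨s, Finset.mem_coe.mp hs, mem_ballF.mpr hd⟩
      have hcard2 : Fintype.card V
          ≤ S.card * (1 + Δ * ∑ i ∈ Finset.range (psdPt T ↑S), (Δ - 1) ^ i) := by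
        calc Fintype.card V = (Finset.univ : Finset V).card := Finset.card_univ.symm
          _ ≤ (S.biUnion fun s => ballF T s (psdPt T ↑S)).card := Finset.card_le_card hcover
          _ ≤ ∑ s ∈ S, (ballF T s (psdPt T ↑S)).card := Finset.card_biUnion_le
          _ ≤ ∑ _s ∈ S, (1 + Δ * ∑ i ∈ Finset.range (psdPt T ↑S), (Δ - 1) ^ i) :=
              Finset.sum_le_sum fun s _ => ball_card_le hT hΔ hdeg s _
          _ = S.card * (1 + Δ * ∑ i ∈ Finset.range (psdPt T ↑S), (Δ - 1) ^ i) := by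
              rw [Finset.sum_const, smul_eq_mul]
      have harith := arith_lt hΔ hm1 (show S.card + psdPt T ↑S ≤ h by omega)
      omega
    have hinf := Nat.sInf_mem ⟨_, hmem⟩
    exact le_antisymm hupper (hlower _ hinf)
  · have hnat : (Δ - 2) * Fintype.card V + 2 = Δ * (Δ - 1) ^ h := by
      rw [hcard]; exact n_formula hΔ h
    have hcast : ((Δ : ℝ) - 2) * (Fintype.card V : ℝ) + 2 = (Δ : ℝ) * ((Δ : ℝ) - 1) ^ h := by
      have h2 := congrArg (fun n : ℕ => (n : ℝ)) hnat
      push_cast [Nat.cast_sub (show 2 ≤ Δ by omega), Nat.cast_sub (show 1 ≤ Δ by omega)] at h2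
      simpa using h2
    have hΔ0 : (Δ : ℝ) ≠ 0 := by
      have : (3 : ℝ) ≤ (Δ : ℝ) := by exact_mod_cast hΔ
      linarith
    have hdiv : (((Δ : ℝ) - 2) * (Fintype.card V : ℝ) + 2) / (Δ : ℝ)
        = ((Δ : ℝ) - 1) ^ h := by
      rw [hcast, mul_div_cancel_left₀ _ hΔ0]
    rw [hdiv, Real.logb_pow, Real.logb_self_eq_one (by
      have : (3 : ℝ) ≤ (Δ : ℝ) := by exact_mod_cast hΔ
      linarith)]
    ring
end
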